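/- Let A ∈ M_n(ℂ) be a matrix with nonzero entries α_1,…,α_{n-1} on the superdiagonal and zeros elsewhere, and B ∈ M_n(ℂ) a matrix with nonzero entries β_1,…,β_{n-1} on the subdiagonal and zeros elsewhere. Then A and B generate M_n(ℂ) as a unital ℂ-algebra. -/

import Mathlib

open Matrix

lemma sandwich {n : ℕ} (M N : Matrix (Fin n) (Fin n) ℂ) (a b p q : Fin n) :
    (M * Matrix.single a b (1:ℂ) * N) p q = M p a * N b q := by
  simp [mul_apply, Matrix.single, ite_and, Finset.mul_sum, Finset.sum_ite_eq,
    Finset.sum_ite_eq', mul_ite, ite_mul]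

lemma sand2 {n : ℕ} (M : Matrix (Fin n) (Fin n) ℂ) (i j : Fin n) :
    Matrix.single i i (1:ℂ) * M * Matrix.single j j 1 = Matrix.single i j (M i j) := by
  ext p q
  simp only [mul_apply, Matrix.single, of_apply, ite_and, Finset.mul_sum, Finset.sum_ite_eq,
    Finset.sum_ite_eq', mul_ite, ite_mul, one_mul, mul_one, zero_mul, mul_zero,
    Finset.mem_univ, if_true]
  split_ifs <;> simp

lemma Apow (n : ℕ) (α : ℕ → ℂ) (k : ℕ) :
    (Matrix.of fun (i j : Fin n) => if (j:ℕ) = (i:ℕ) + 1 then α (i:ℕ) else 0)^k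
    = Matrix.of fun (i j : Fin n) =>
        if (j:ℕ) = (i:ℕ) + k then ∏ t ∈ Finset.range k, α ((i:ℕ)+t) else 0 := by
  induction k with
  | zero =>
    ext i j
    simp [Matrix.one_apply, Fin.ext_iff, eq_comm]
  | succ k ih =>
    rw [pow_succ, ih]
    ext i j
    simp only [mul_apply, of_apply]
    by_cases h : (i:ℕ) + k < n
    · rw [Finset.sum_eq_single (⟨(i:ℕ)+k, h⟩ : Fin n)]
      · simp only [Fin.val_mk, if_pos rfl]
        split_ifs <;> simp_all [Finset.prod_range_succ] <;> omega
      · intro l _ hl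
        rw [if_neg (show ¬(l:ℕ) = (i:ℕ)+k from by simpa [Fin.ext_iff] using hl), zero_mul]
      · simp
    · rw [Finset.sum_eq_zero, if_neg (show ¬(j:ℕ) = (i:ℕ)+(k+1) from by have := j.isLt; omega)]
      intro l _
      rw [if_neg (show ¬(l:ℕ) = (i:ℕ)+k from by have := l.isLt; omega), zero_mul]

lemma Bpow (n : ℕ) (β : ℕ → ℂ) (k : ℕ) :
    (Matrix.of fun (i j : Fin n) => if (i:ℕ) = (j:ℕ) + 1 then β (j:ℕ) else 0)^k
    = Matrix.of fun (i j : Fin n) =>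
        if (i:ℕ) = (j:ℕ) + k then ∏ t ∈ Finset.range k, β ((j:ℕ)+t) else 0 := by
  have h : (Matrix.of fun (i j : Fin n) => if (i:ℕ) = (j:ℕ) + 1 then β (j:ℕ) else 0)
      = (Matrix.of fun (i j : Fin n) => if (j:ℕ) = (i:ℕ) + 1 then β (i:ℕ) else 0)ᵀ := by
    ext i j; rfl
  rw [h, ← Matrix.transpose_pow, Apow]
  ext i j; rfl

theorem stmt6 (n : ℕ) (α β : ℕ → ℂ)
    (hα : ∀ i, i + 1 < n → α i ≠ 0) (hβ : ∀ i, i + 1 < n → β i ≠ 0)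
    (A B : Matrix (Fin n) (Fin n) ℂ)
    (hA : A = Matrix.of fun (i j : Fin n) => if (j : ℕ) = (i : ℕ) + 1 then α (i : ℕ) else 0)
    (hB : B = Matrix.of fun (i j : Fin n) => if (i : ℕ) = (j : ℕ) + 1 then β (j : ℕ) else 0) :
    Algebra.adjoin ℂ {A, B} = ⊤ := by
  rcases Nat.eq_zero_or_pos n with hn | hn
  · subst hn
    ext M
    simp only [Algebra.mem_top, iff_true]
    have : M = 0 := by ext i j; exact i.elim0
    rw [this]; exact zero_mem _
  set S := Algebra.adjoin ℂ {A, B} with hS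
  have hAS : A ∈ S := Algebra.subset_adjoin (Set.mem_insert _ _)
  have hBS : B ∈ S := Algebra.subset_adjoin (Set.mem_insert_iff.2 (Or.inr rfl))
  have hApow : ∀ k, A^k = Matrix.of fun (i j : Fin n) =>
      if (j:ℕ) = (i:ℕ) + k then ∏ t ∈ Finset.range k, α ((i:ℕ)+t) else 0 := by
    intro k; rw [hA]; exact Apow n α k
  have hBpow : ∀ k, B^k = Matrix.of fun (i j : Fin n) =>
      if (i:ℕ) = (j:ℕ) + k then ∏ t ∈ Finset.range k, β ((j:ℕ)+t) else 0 := by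
    intro k; rw [hB]; exact Bpow n β k
  -- E00 ∈ S
  have hcne : ((∏ t ∈ Finset.range (n-1), α t) * ∏ t ∈ Finset.range (n-1), β t) ≠ 0 := by
    refine mul_ne_zero ?_ ?_
    · exact Finset.prod_ne_zero_iff.2 fun t ht => hα t (by simp at ht; omega)
    · exact Finset.prod_ne_zero_iff.2 fun t ht => hβ t (by simp at ht; omega)
  have key : A^(n-1) * B^(n-1)
      = ((∏ t ∈ Finset.range (n-1), α t) * ∏ t ∈ Finset.range (n-1), β t)
        • Matrix.single (⟨0, hn⟩ : Fin n) ⟨0, hn⟩ 1 := by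
    rw [hApow, hBpow]
    ext i j
    simp only [mul_apply, of_apply, Matrix.smul_apply, smul_eq_mul, Matrix.single,
      Fin.ext_iff, Fin.val_mk]
    rw [Finset.sum_eq_single (⟨n-1, by omega⟩ : Fin n)]
    · show _ = _
      split_ifs with h1 h2 h3 <;> (try simp only [Fin.val_mk] at *) <;>
        first
        | omega
        | (obtain ⟨hi0, hj0⟩ := h3
           rw [← hi0, ← hj0]
           simp)
        | simp
    · intro l _ hl
      rw [if_neg (show ¬(l:ℕ) = (i:ℕ)+(n-1) from fun h => hl (by
        apply Fin.ext
        simp only [Fin.val_mk]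
        have := l.isLt; omega)), zero_mul]
    · intro h; exact absurd (Finset.mem_univ _) h
  have h00 : Matrix.single (⟨0, hn⟩ : Fin n) ⟨0, hn⟩ (1:ℂ) ∈ S := by
    have hm : A^(n-1) * B^(n-1) ∈ S := S.mul_mem (S.pow_mem hAS _) (S.pow_mem hBS _)
    rw [key] at hm
    have := S.smul_mem hm ((∏ t ∈ Finset.range (n-1), α t) * ∏ t ∈ Finset.range (n-1), β t)⁻¹
    rwa [smul_smul, inv_mul_cancel₀ hcne, one_smul] at this
  -- diagonal units
  have diag : ∀ k (hk : k < n), Matrix.single (⟨k, hk⟩ : Fin n) ⟨k, hk⟩ (1:ℂ) ∈ S := by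
    intro k
    induction k with
    | zero => intro hk; exact h00
    | succ k ih =>
      intro hk1
      have hk : k < n := by omega
      have claim : B * Matrix.single (⟨k, hk⟩ : Fin n) ⟨k, hk⟩ 1 * A
          = (β k * α k) • Matrix.single (⟨k+1, hk1⟩ : Fin n) ⟨k+1, hk1⟩ 1 := by
        ext p q
        rw [sandwich, hA, hB]
        simp only [of_apply, Matrix.smul_apply, smul_eq_mul, Matrix.single,
          Fin.ext_iff, Fin.val_mk]
        split_ifs <;> first | omega | ring
      have hmem : B * Matrix.single (⟨k, hk⟩ : Fin n) ⟨k, hk⟩ 1 * A ∈ S :=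
        S.mul_mem (S.mul_mem hBS (ih hk)) hAS
      rw [claim] at hmem
      have := S.smul_mem hmem (β k * α k)⁻¹
      rwa [smul_smul, inv_mul_cancel₀ (mul_ne_zero (hβ k hk1) (hα k hk1)), one_smul] at this
  -- all units
  have offdiag : ∀ i j : Fin n, Matrix.single i j (1:ℂ) ∈ S := by
    intro i j
    have hi : Matrix.single i i (1:ℂ) ∈ S := by
      have := diag (i:ℕ) i.isLt; simpa only [Fin.eta] using this
    have hj : Matrix.single j j (1:ℂ) ∈ S := by
      have := diag (j:ℕ) j.isLt; simpa only [Fin.eta] using this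
    rcases le_or_gt (i:ℕ) (j:ℕ) with hle | hlt
    · set m := (j:ℕ) - (i:ℕ) with hm
      have hcne : (A^m) i j ≠ 0 := by
        rw [hApow]
        simp only [of_apply]
        rw [if_pos (by omega)]
        exact Finset.prod_ne_zero_iff.2 fun t ht => hα _ (by
          simp only [Finset.mem_range] at ht; have := j.isLt; omega)
      have hmem : Matrix.single i j ((A^m) i j) ∈ S := by
        rw [← sand2]
        exact S.mul_mem (S.mul_mem hi (S.pow_mem hAS m)) hj
      have h1 : Matrix.single i j (1:ℂ) = ((A^m) i j)⁻¹ • Matrix.single i j ((A^m) i j) := by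
        rw [smul_single, smul_eq_mul, inv_mul_cancel₀ hcne]
      rw [h1]
      exact S.smul_mem hmem _
    · set m := (i:ℕ) - (j:ℕ) with hm
      have hcne : (B^m) i j ≠ 0 := by
        rw [hBpow]
        simp only [of_apply]
        rw [if_pos (by omega)]
        exact Finset.prod_ne_zero_iff.2 fun t ht => hβ _ (by
          simp only [Finset.mem_range] at ht; have := i.isLt; omega)
      have hmem : Matrix.single i j ((B^m) i j) ∈ S := by
        rw [← sand2]
        exact S.mul_mem (S.mul_mem hi (S.pow_mem hBS m)) hj
      have h1 : Matrix.single i j (1:ℂ) = ((B^m) i j)⁻¹ • Matrix.single i j ((B^m) i j) := by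
        rw [smul_single, smul_eq_mul, inv_mul_cancel₀ hcne]
      rw [h1]
      exact S.smul_mem hmem _
  rw [eq_top_iff]
  rintro M -
  rw [matrix_eq_sum_single M]
  refine Subalgebra.sum_mem _ fun i _ => Subalgebra.sum_mem _ fun j _ => ?_
  have h1 : Matrix.single i j (M i j) = M i j • Matrix.single i j 1 := by
    rw [smul_single, smul_eq_mul, mul_one]
  rw [h1]
  exact S.smul_mem (offdiag i j) _
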